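/- Let T ~ Binomial(n, q) with q ∈ (0,1]. Then for any real p > 0, E[(n - T)^p / (T + 1)] ≤ ((n+1)(1-q))^p (1 + p/(2(n+1)(1-q)))^p / ((n+1)q), and also E[(n - T)^p / (T + 1)] ≤ n^p. -/

import Mathlib

open Finset


-- pmf sums to 1
lemma pmf_sum (m : ℕ) (r : ℝ) :
    ∑ t ∈ range (m+1), (m.choose t : ℝ) * r^t * (1-r)^(m-t) = 1 := by
  have h : ∑ t ∈ range (m+1), (m.choose t : ℝ) * r^t * (1-r)^(m-t) = (r + (1-r))^m := by
    rw [add_pow]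
    exact Finset.sum_congr rfl (fun t _ => by ring)
  rw [h, show r + (1-r) = 1 by ring, one_pow]

-- shift identity
lemma shift_sum (m : ℕ) (r : ℝ) (f : ℕ → ℝ) :
    ∑ t ∈ range (m+1+1), ((m+1).choose t : ℝ) * r^t * (1-r)^(m+1-t) * (t:ℝ) * f t
    = (m+1) * r * ∑ s ∈ range (m+1), (m.choose s : ℝ) * r^s * (1-r)^(m-s) * f (s+1) := by
  rw [Finset.sum_range_succ']
  simp only [Nat.cast_zero, mul_zero, zero_mul, add_zero]
  rw [Finset.mul_sum]
  refine Finset.sum_congr rfl (fun s hs => ?_)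
  have hc : (((m+1).choose (s+1) : ℕ) : ℝ) * ((s:ℝ)+1) = ((m:ℝ)+1) * (m.choose s : ℝ) := by
    have h := Nat.add_one_mul_choose_eq m s
    have h2 : ((m.succ * m.choose s : ℕ) : ℝ) = ((m.succ.choose s.succ * s.succ : ℕ) : ℝ) := by
      rw [h]
    push_cast at h2
    linarith
  have hsub : m + 1 - (s + 1) = m - s := by omega
  rw [hsub]
  push_cast
  linear_combination (r^(s+1) * (1-r)^(m-s) * f (s+1)) * hc

-- mean of binomial
lemma mean_sum (m : ℕ) (r : ℝ) :
    ∑ t ∈ range (m+1), (m.choose t : ℝ) * r^t * (1-r)^(m-t) * (t:ℝ) = m * r := by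
  cases m with
  | zero => simp
  | succ m =>
    have h := shift_sum m r (fun _ => 1)
    simp only [mul_one] at h
    rw [h, pmf_sum m r, mul_one]
    push_cast; ring

-- AM-GM: x * y^(k-1) ≤ (x/k + (k-1)/k * y)^k for k ≥ 1
lemma amgm_aux {x y k : ℝ} (hx : 0 ≤ x) (hy : 0 ≤ y) (hk : 1 ≤ k) :
    x * y ^ (k - 1) ≤ (x/k + (k-1)/k * y) ^ k := by
  have hk0 : 0 < k := lt_of_lt_of_le one_pos hk
  have hw : 1/k + (k-1)/k = 1 := by field_simp; ring
  have h := Real.geom_mean_le_arith_mean2_weighted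
    (by positivity : (0:ℝ) ≤ 1/k) (div_nonneg (by linarith) hk0.le) hx hy hw
  have hL : (x ^ (1/k) * y ^ ((k-1)/k)) ^ k = x * y ^ (k-1) := by
    rw [Real.mul_rpow (Real.rpow_nonneg hx _) (Real.rpow_nonneg hy _),
        ← Real.rpow_mul hx, ← Real.rpow_mul hy, one_div, inv_mul_cancel₀ hk0.ne',
        Real.rpow_one, div_mul_cancel₀ _ hk0.ne']
  calc x * y ^ (k-1) = (x ^ (1/k) * y ^ ((k-1)/k)) ^ k := hL.symm
    _ ≤ (1/k * x + (k-1)/k * y) ^ k := by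
        apply Real.rpow_le_rpow (by positivity) h hk0.le
    _ = (x/k + (k-1)/k * y) ^ k := by ring_nf

lemma rpow_split {x k : ℝ} (hx : 0 ≤ x) (hk : 1 ≤ k) : x ^ k = x * x ^ (k-1) := by
  rcases eq_or_lt_of_le hx with h | h
  · rw [← h, Real.zero_rpow (by intro h'; rw [h'] at hk; linarith), zero_mul]
  · rw [show k = 1 + (k-1) by ring, Real.rpow_add h, Real.rpow_one]
    ring_nf

lemma moment_jensen (r : ℝ) (hr0 : 0 ≤ r) (hr1 : r ≤ 1) (m : ℕ) (a k : ℝ) (ha : 0 ≤ a)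
    (hk0 : 0 ≤ k) (hk1 : k ≤ 1) :
    ∑ t ∈ range (m+1), (m.choose t : ℝ) * r^t * (1-r)^(m-t) * ((t:ℝ)+a)^k
      ≤ ((m:ℝ)*r + a)^k := by
  have h1r : (0:ℝ) ≤ 1 - r := by linarith
  rcases eq_or_lt_of_le hk0 with h0 | h0
  · rw [← h0]
    simp only [Real.rpow_zero, mul_one]
    rw [pmf_sum m r]
  · set w : ℕ → ℝ := fun t => (m.choose t : ℝ) * r^t * (1-r)^(m-t) with hwdef
    have hw : ∀ t ∈ range (m+1), 0 ≤ w t := fun t _ => by positivity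
    have hw' : ∑ t ∈ range (m+1), w t = 1 := pmf_sum m r
    have hz : ∀ t ∈ range (m+1), 0 ≤ ((t:ℝ)+a)^k := fun t _ =>
      Real.rpow_nonneg (by positivity) _
    have hp1 : (1:ℝ) ≤ 1/k := by rw [le_div_iff₀ h0]; linarith
    have h := Real.arith_mean_le_rpow_mean (range (m+1)) w (fun t => ((t:ℝ)+a)^k)
      hw hw' hz hp1
    have hsimp : ∀ t : ℕ, (((t:ℝ)+a)^k)^(1/k) = (t:ℝ)+a := by
      intro t
      rw [← Real.rpow_mul (by positivity), mul_one_div, div_self h0.ne', Real.rpow_one]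
    simp only [hsimp, one_div_one_div] at h
    have hmean : ∑ t ∈ range (m+1), w t * ((t:ℝ)+a) = (m:ℝ)*r + a := by
      have : ∀ t ∈ range (m+1), w t * ((t:ℝ)+a) = (w t * (t:ℝ)) + a * w t :=
        fun t _ => by ring
      rw [Finset.sum_congr rfl this, Finset.sum_add_distrib, ← Finset.mul_sum,
        mean_sum m r, pmf_sum m r, mul_one]
    rw [hmean] at h
    exact h

set_option maxHeartbeats 1000000 in
lemma moment_bound (r : ℝ) (hr0 : 0 ≤ r) (hr1 : r ≤ 1) :
    ∀ (N : ℕ) (k : ℝ), 0 ≤ k → k ≤ N → ∀ (m : ℕ) (a : ℝ), 0 ≤ a →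
    ∑ t ∈ range (m+1), (m.choose t : ℝ) * r^t * (1-r)^(m-t) * ((t:ℝ)+a)^k
      ≤ ((m:ℝ)*r + a + k/2)^k := by
  have h1r : (0:ℝ) ≤ 1 - r := by linarith
  have jensen_final : ∀ (m : ℕ) (a k : ℝ), 0 ≤ a → 0 ≤ k → k ≤ 1 →
      ∑ t ∈ range (m+1), (m.choose t : ℝ) * r^t * (1-r)^(m-t) * ((t:ℝ)+a)^k
        ≤ ((m:ℝ)*r + a + k/2)^k := by
    intro m a k ha hk0 hk1
    refine le_trans (moment_jensen r hr0 hr1 m a k ha hk0 hk1) ?_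
    exact Real.rpow_le_rpow (by positivity) (by linarith) hk0
  intro N
  induction N with
  | zero =>
    intro k hk0 hkN m a ha
    exact jensen_final m a k ha hk0 (le_trans hkN (by norm_num))
  | succ N ih =>
    intro k hk0 hkN m a ha
    rcases le_or_gt k 1 with hk1 | hk1
    · exact jensen_final m a k ha hk0 hk1
    · have hk1' : (1:ℝ) ≤ k := hk1.le
      have hkN' : k - 1 ≤ N := by
        push_cast at hkN ⊢; linarith
      cases m with
      | zero =>
        simp only [Finset.range_one, Finset.sum_singleton, Nat.choose_self, Nat.cast_one,
          pow_zero, Nat.sub_self, one_mul, mul_one, Nat.cast_zero, zero_add, zero_mul]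
        exact Real.rpow_le_rpow ha (by linarith) hk0
      | succ m =>
        set μ : ℝ := ((m:ℝ)+1)*r with hμ
        set M : ℝ := μ + a + k/2 with hM
        have hμ0 : 0 ≤ μ := by positivity
        have hM0 : 0 ≤ M := by positivity
        have e1 : ∀ t ∈ range (m+1+1),
            ((m+1).choose t : ℝ) * r^t * (1-r)^(m+1-t) * ((t:ℝ)+a)^k
            = ((m+1).choose t : ℝ) * r^t * (1-r)^(m+1-t) * (t:ℝ) * (((t:ℝ)+a)^(k-1))
              + a * (((m+1).choose t : ℝ) * r^t * (1-r)^(m+1-t) * ((t:ℝ)+a)^(k-1)) := by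
          intro t _
          rw [rpow_split (by positivity : (0:ℝ) ≤ (t:ℝ)+a) hk1']
          ring
        rw [Finset.sum_congr rfl e1, Finset.sum_add_distrib, ← Finset.mul_sum,
          shift_sum m r (fun t => ((t:ℝ)+a)^(k-1))]
        have e2 : ∀ s ∈ range (m+1),
            (m.choose s : ℝ) * r^s * (1-r)^(m-s) * (((s+1:ℕ):ℝ)+a)^(k-1)
            = (m.choose s : ℝ) * r^s * (1-r)^(m-s) * (((s:ℝ)+(a+1))^(k-1)) := by
          intro s _
          push_cast
          ring_nf
        rw [Finset.sum_congr rfl e2]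
        have B1 := ih (k-1) (by linarith) hkN' m (a+1) (by linarith)
        have B2 := ih (k-1) (by linarith) hkN' (m+1) a ha
        have hc1 : (m:ℝ)*r + (a+1) + (k-1)/2 ≤ M + 1/2 := by
          rw [hM, hμ]; nlinarith
        have hc2 : ((m+1:ℕ):ℝ)*r + a + (k-1)/2 ≤ M + 1/2 := by
          rw [hM, hμ]; push_cast; nlinarith
        have hMB : (0:ℝ) ≤ M + 1/2 := by linarith
        have hmr1 : (0:ℝ) ≤ (m:ℝ)*r := by positivity
        have hmr2 : (0:ℝ) ≤ ((m+1:ℕ):ℝ)*r := by positivity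
        have B1' : ∑ s ∈ range (m+1),
            (m.choose s : ℝ) * r^s * (1-r)^(m-s) * (((s:ℝ)+(a+1))^(k-1))
            ≤ (M + 1/2)^(k-1) :=
          le_trans B1 (Real.rpow_le_rpow (by linarith) hc1 (by linarith))
        have B2' : ∑ t ∈ range (m+1+1),
            ((m+1).choose t : ℝ) * r^t * (1-r)^(m+1-t) * ((t:ℝ)+a)^(k-1)
            ≤ (M + 1/2)^(k-1) :=
          le_trans B2 (Real.rpow_le_rpow (by linarith) hc2 (by linarith))
        have hnn : ∀ t ∈ range (m+1+1),
            (0:ℝ) ≤ ((m+1).choose t : ℝ) * r^t * (1-r)^(m+1-t) * ((t:ℝ)+a)^(k-1) := by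
          intro t _
          have : (0:ℝ) ≤ ((t:ℝ)+a)^(k-1) := Real.rpow_nonneg (by positivity) _
          positivity
        have step1 : ((m:ℝ)+1)*r * (∑ s ∈ range (m+1),
              (m.choose s : ℝ) * r^s * (1-r)^(m-s) * (((s:ℝ)+(a+1))^(k-1)))
            + a * (∑ t ∈ range (m+1+1),
              ((m+1).choose t : ℝ) * r^t * (1-r)^(m+1-t) * ((t:ℝ)+a)^(k-1))
            ≤ (μ + a) * (M + 1/2)^(k-1) := by
          have t1 : ((m:ℝ)+1)*r * (∑ s ∈ range (m+1),
              (m.choose s : ℝ) * r^s * (1-r)^(m-s) * (((s:ℝ)+(a+1))^(k-1)))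
              ≤ μ * (M + 1/2)^(k-1) := by
            rw [hμ]
            exact mul_le_mul_of_nonneg_left B1' (by positivity)
          have t2 : a * (∑ t ∈ range (m+1+1),
              ((m+1).choose t : ℝ) * r^t * (1-r)^(m+1-t) * ((t:ℝ)+a)^(k-1))
              ≤ a * (M + 1/2)^(k-1) :=
            mul_le_mul_of_nonneg_left B2' ha
          nlinarith [t1, t2]
        refine le_trans step1 ?_
        have amgm := amgm_aux (x := μ + a) (y := M + 1/2) (by positivity) hMB hk1'
        have hmid : (μ+a)/k + (k-1)/k * (M+1/2) = M - 1/(2*k) := by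
          rw [hM]
          field_simp
          ring
        rw [hmid] at amgm
        refine le_trans amgm ?_
        have hgoal : ((m+1:ℕ):ℝ)*r + a + k/2 = M := by rw [hM, hμ]; push_cast; ring
        rw [hgoal]
        have hk0' : (0:ℝ) < k := by linarith
        have hMk : 0 ≤ M - 1/(2*k) := by
          have h2k : 1/(2*k) ≤ 1/2 := by
            rw [div_le_div_iff₀ (by linarith) (by norm_num)]; linarith
          linarith
        exact Real.rpow_le_rpow hMk (by linarith [show (0:ℝ) < 1/(2*k) from by positivity]) hk0

/-- For `T ~ Binomial(n, q)` with `q ∈ (0,1]` and real `p > 0`: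
(assuming `q < 1`) `E[(n-T)^p/(T+1)] ≤ ((n+1)(1-q))^p (1 + p/(2(n+1)(1-q)))^p / ((n+1)q)`,
and also `E[(n-T)^p/(T+1)] ≤ n^p`. -/

theorem binomial_ratio_moment_bound (n : ℕ) (q : ℝ) (hq : 0 < q) (hq1 : q ≤ 1)
    (p : ℝ) (hp : 0 < p) :
    (q < 1 →
      ∑ t ∈ Finset.range (n + 1),
        (n.choose t : ℝ) * q ^ t * (1 - q) ^ (n - t) *
          ((((n : ℝ) - (t : ℝ)) ^ p) / ((t : ℝ) + 1))
        ≤ (((n : ℝ) + 1) * (1 - q)) ^ p * (1 + p / (2 * ((n : ℝ) + 1) * (1 - q))) ^ p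
            / (((n : ℝ) + 1) * q)) ∧
    ∑ t ∈ Finset.range (n + 1),
        (n.choose t : ℝ) * q ^ t * (1 - q) ^ (n - t) *
          ((((n : ℝ) - (t : ℝ)) ^ p) / ((t : ℝ) + 1))
      ≤ (n : ℝ) ^ p := by
  have h1q : (0:ℝ) ≤ 1 - q := by linarith
  constructor
  · intro hqlt
    have h1q' : (0:ℝ) < 1 - q := by linarith
    have hA : (0:ℝ) < ((n:ℝ)+1)*(1-q) := by positivity
    have hB : (0:ℝ) < ((n:ℝ)+1)*q := by positivity
    set S1 : ℝ := ∑ t ∈ range (n+1),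
      ((n+1).choose (t+1) : ℝ) * q^(t+1) * (1-q)^(n-t) * ((n:ℝ)-(t:ℝ))^p with hS1
    set S2 : ℝ := ∑ s ∈ range (n+2),
      ((n+1).choose s : ℝ) * q^s * (1-q)^(n+1-s) * ((n+1-s : ℕ) : ℝ)^p with hS2
    -- Step A : LHS = S1 / ((n+1) q)
    have eA : ∑ t ∈ Finset.range (n + 1),
        (n.choose t : ℝ) * q ^ t * (1 - q) ^ (n - t) *
          ((((n : ℝ) - (t : ℝ)) ^ p) / ((t : ℝ) + 1))
        = S1 / (((n:ℝ)+1)*q) := by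
      rw [hS1, Finset.sum_div]
      refine Finset.sum_congr rfl fun t _ => ?_
      have hc : (((n+1).choose (t+1) : ℕ) : ℝ) * ((t:ℝ)+1) = ((n:ℝ)+1) * (n.choose t : ℝ) := by
        have h := Nat.add_one_mul_choose_eq n t
        have h2 : ((n.succ * n.choose t : ℕ) : ℝ) = ((n.succ.choose t.succ * t.succ : ℕ) : ℝ) := by
          rw [h]
        push_cast at h2
        linarith
      have ht1 : ((t:ℝ)+1) ≠ 0 := by positivity
      rw [← mul_div_assoc, div_eq_div_iff ht1 hB.ne']
      linear_combination (-(q^(t+1) * (1-q)^(n-t) * ((n:ℝ)-(t:ℝ))^p)) * hc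
    -- Step B : S1 ≤ S2
    have eB : S1 ≤ S2 := by
      rw [hS2, show n+2 = (n+1)+1 from rfl, Finset.sum_range_succ']
      have e : ∀ t ∈ range (n+1),
          ((n+1).choose (t+1) : ℝ) * q^(t+1) * (1-q)^(n+1-(t+1)) * ((n+1-(t+1) : ℕ) : ℝ)^p
          = ((n+1).choose (t+1) : ℝ) * q^(t+1) * (1-q)^(n-t) * ((n:ℝ)-(t:ℝ))^p := by
        intro t ht
        have htn : t ≤ n := Nat.lt_succ_iff.mp (Finset.mem_range.mp ht)
        have h1 : n+1-(t+1) = n - t := by omega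
        have h2 : ((n-t : ℕ) : ℝ) = (n:ℝ) - (t:ℝ) := by
          push_cast [Nat.cast_sub htn]; ring
        rw [h1, h2]
      rw [Finset.sum_congr rfl e]
      have h0 : (0:ℝ) ≤ ((n+1).choose 0 : ℝ) * q^0 * (1-q)^(n+1-0) * ((n+1-0 : ℕ) : ℝ)^p := by
        have : (0:ℝ) ≤ ((n+1-0 : ℕ) : ℝ)^p := Real.rpow_nonneg (by positivity) _
        positivity
      linarith
    -- Step C : S2 equals the reflected binomial sum
    have eC : S2 = ∑ t ∈ range ((n+1)+1),
        ((n+1).choose t : ℝ) * (1-q)^t * q^(n+1-t) * ((t:ℝ)+0)^p := by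
      rw [hS2, ← Finset.sum_range_reflect]
      refine Finset.sum_congr rfl fun j hj => ?_
      have hjn : j ≤ n + 1 := Nat.lt_succ_iff.mp (Finset.mem_range.mp hj)
      have h1 : n + 1 + 1 - 1 - j = n + 1 - j := by omega
      have h2 : n + 1 - (n + 1 - j) = j := by omega
      have h3 : (n+1).choose (n+1-j) = (n+1).choose j := Nat.choose_symm hjn
      rw [h1, h3, h2, add_zero]
      ring
    -- Step moment bound
    have hmb := moment_bound (1-q) h1q (by linarith) ⌈p⌉₊ p hp.le (Nat.le_ceil p) (n+1) 0 le_rfl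
    rw [show (1 - (1-q)) = q by ring] at hmb
    have eC' : S2 ≤ (((n:ℝ)+1)*(1-q) + p/2)^p := by
      rw [eC]
      refine le_trans hmb (le_of_eq ?_)
      push_cast
      ring_nf
    -- Step D : rewrite the RHS
    have eD : (((n : ℝ) + 1) * (1 - q)) ^ p * (1 + p / (2 * ((n : ℝ) + 1) * (1 - q))) ^ p
        = (((n:ℝ)+1)*(1-q) + p/2)^p := by
      have hBpos : (0:ℝ) ≤ 1 + p / (2 * ((n : ℝ) + 1) * (1 - q)) := by positivity
      rw [← Real.mul_rpow hA.le hBpos]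
      congr 1
      field_simp
    rw [eA, eD]
    gcongr
    exact le_trans eB eC'
  · have hterm : ∀ t ∈ range (n+1),
        (n.choose t : ℝ) * q^t * (1-q)^(n-t) * (((n:ℝ)-(t:ℝ))^p/((t:ℝ)+1))
        ≤ (n.choose t : ℝ) * q^t * (1-q)^(n-t) * (n:ℝ)^p := by
      intro t ht
      have htn : t ≤ n := Nat.lt_succ_iff.mp (Finset.mem_range.mp ht)
      have htc : (t:ℝ) ≤ (n:ℝ) := Nat.cast_le.mpr htn
      have ht0 : (0:ℝ) ≤ (t:ℝ) := Nat.cast_nonneg t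
      have h0 : (0:ℝ) ≤ (n:ℝ) - (t:ℝ) := by linarith
      have h1 : ((n:ℝ)-(t:ℝ))^p ≤ (n:ℝ)^p :=
        Real.rpow_le_rpow h0 (by linarith) hp.le
      have h2 : ((n:ℝ)-(t:ℝ))^p/((t:ℝ)+1) ≤ ((n:ℝ)-(t:ℝ))^p :=
        div_le_self (Real.rpow_nonneg h0 _) (by linarith)
      exact mul_le_mul_of_nonneg_left (le_trans h2 h1) (by positivity)
    calc ∑ t ∈ Finset.range (n + 1),
        (n.choose t : ℝ) * q ^ t * (1 - q) ^ (n - t) *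
          ((((n : ℝ) - (t : ℝ)) ^ p) / ((t : ℝ) + 1))
        ≤ ∑ t ∈ range (n+1), (n.choose t : ℝ) * q^t * (1-q)^(n-t) * (n:ℝ)^p :=
          Finset.sum_le_sum hterm
      _ = (∑ t ∈ range (n+1), (n.choose t : ℝ) * q^t * (1-q)^(n-t)) * (n:ℝ)^p := by
          rw [Finset.sum_mul]
      _ = (n:ℝ)^p := by rw [pmf_sum n q, one_mul]
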